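/- Let (Ω, 𝔽, P) be a probability space, K ≥ 1 and T ≥ 1 natural numbers, and a > 0. For each i ∈ Fin K and each s ∈ {1, …, T}, let Z_{i,s} : Ω → ℝ be a nonnegative random variable with P(Z_{i,s} > x) ≤ 2·exp(−a s x²) for all x > 0, and set Z_{i,0} := 0. Let τ_i : Ω → {0, 1, …, T} be random variables (measurable) with Σ_{i} τ_i(ω) = T for all ω. Define W(ω) := (1/T) Σ_i τ_i(ω) · Z_{i, τ_i(ω)}(ω). Then for all x > 0, P(W > x) ≤ 2KT·exp(−a T x² / K²). -/

import Mathlib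

open MeasureTheory

/-- Concentration of the empirical distribution of a bandit policy: if each
`Z i s` (`1 ≤ s ≤ T`) is nonnegative with tail `P(Z i s > x) ≤ 2 exp(−a s x²)`,
`Z i 0 = 0`, and the (random, measurable) pull counts `τ i` sum to `T`, then
`W = (1/T) ∑ i, τ i · Z i (τ i)` satisfies
`P(W > x) ≤ 2KT exp(−a T x² / K²)` for all `x > 0`. -/
theorem policy_empirical_concentration
    {Ω : Type*} [MeasurableSpace Ω] (P : Measure Ω) [IsProbabilityMeasure P]
    (K T : ℕ) (hK : 1 ≤ K) (hT : 1 ≤ T) (a : ℝ) (ha : 0 < a)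
    (Z : Fin K → ℕ → Ω → ℝ)
    (hZmeas : ∀ i s, Measurable (Z i s))
    (hZ0 : ∀ i ω, Z i 0 ω = 0)
    (hZnn : ∀ i s, 1 ≤ s → s ≤ T → ∀ ω, 0 ≤ Z i s ω)
    (htail : ∀ i s, 1 ≤ s → s ≤ T → ∀ x : ℝ, 0 < x →
      P {ω | x < Z i s ω} ≤ ENNReal.ofReal (2 * Real.exp (-a * s * x ^ 2)))
    (τ : Fin K → Ω → ℕ) (hτmeas : ∀ i, Measurable (τ i))
    (hτle : ∀ i ω, τ i ω ≤ T) (hτsum : ∀ ω, ∑ i, τ i ω = T) :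
    ∀ x : ℝ, 0 < x →
      P {ω | x < (1 / (T : ℝ)) * ∑ i, (τ i ω : ℝ) * Z i (τ i ω) ω} ≤
        ENNReal.ofReal (2 * K * T * Real.exp (-a * T * x ^ 2 / K ^ 2)) := by
  intro x hx
  have hTpos : (0:ℝ) < T := by exact_mod_cast hT
  have hKpos : (0:ℝ) < K := by exact_mod_cast hK
  set c : ℝ := 2 * Real.exp (-a * T * x ^ 2 / K ^ 2) with hc
  have hcnn : 0 ≤ c := by positivity
  have hsub : {ω | x < (1 / (T : ℝ)) * ∑ i, (τ i ω : ℝ) * Z i (τ i ω) ω} ⊆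
      ⋃ i : Fin K, ⋃ s ∈ Finset.Icc 1 T,
        ({ω | τ i ω = s} ∩ {ω | (T:ℝ) * x / (K * s) < Z i s ω}) := by
    intro ω hω
    simp only [Set.mem_setOf_eq] at hω
    have hS : (T:ℝ) * x < ∑ i, (τ i ω : ℝ) * Z i (τ i ω) ω := by
      rw [one_div, ← div_eq_inv_mul, lt_div_iff₀ hTpos] at hω
      linarith
    have hconst : ∑ _i : Fin K, (T:ℝ) * x / K < ∑ i, (τ i ω : ℝ) * Z i (τ i ω) ω := by
      rw [Finset.sum_const, Finset.card_univ, Fintype.card_fin, nsmul_eq_mul]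
      have : (K:ℝ) * ((T:ℝ) * x / K) = (T:ℝ) * x := by field_simp
      rw [this]; exact hS
    obtain ⟨i, -, hi⟩ := Finset.exists_lt_of_sum_lt hconst
    have hτpos : 1 ≤ τ i ω := by
      by_contra h
      have h0 : τ i ω = 0 := by omega
      rw [h0] at hi
      simp [hZ0] at hi
      have : (0:ℝ) < (T:ℝ) * x / K := by positivity
      linarith
    set s := τ i ω with hs
    have hsT : s ≤ T := hτle i ω
    have hspos : (0:ℝ) < s := by exact_mod_cast hτpos
    have hZgt : (T:ℝ) * x / (K * s) < Z i s ω := by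
      rw [div_lt_iff₀ (by positivity)]
      rw [div_lt_iff₀ hKpos] at hi
      nlinarith
    simp only [Set.mem_iUnion, Finset.mem_Icc, Set.mem_inter_iff, Set.mem_setOf_eq]
    exact ⟨i, s, ⟨hτpos, hsT⟩, rfl, hZgt⟩
  have hterm : ∀ (i : Fin K) (s : ℕ), 1 ≤ s → s ≤ T →
      P ({ω | τ i ω = s} ∩ {ω | (T:ℝ) * x / (K * s) < Z i s ω}) ≤ ENNReal.ofReal c := by
    intro i s hs1 hsT
    have hspos : (0:ℝ) < s := by exact_mod_cast hs1
    have hy : (0:ℝ) < (T:ℝ) * x / (K * s) := by positivity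
    refine le_trans (le_trans (measure_mono Set.inter_subset_right)
      (htail i s hs1 hsT _ hy)) ?_
    apply ENNReal.ofReal_le_ofReal
    have hexp : -a * s * ((T:ℝ) * x / (K * s)) ^ 2 ≤ -a * T * x ^ 2 / K ^ 2 := by
      have h1 : ((T:ℝ) * x / (K * s)) ^ 2 = (T:ℝ)^2 * x^2 / (K^2 * s^2) := by
        rw [div_pow]; ring_nf
      rw [h1]
      have hsTr : (s:ℝ) ≤ T := by exact_mod_cast hsT
      have h2 : -a * s * ((T:ℝ)^2 * x^2 / (K^2 * s^2)) = -(a * T^2 * x^2 / (K^2 * s)) := by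
        field_simp
      have h3 : -a * (T:ℝ) * x^2 / K^2 = -(a * T * x^2 / K^2) := by ring
      rw [h2, h3, neg_le_neg_iff, div_le_div_iff₀ (by positivity) (by positivity)]
      nlinarith [mul_le_mul_of_nonneg_left hsTr (show (0:ℝ) ≤ a * T * x^2 * K^2 by positivity)]
    have := Real.exp_le_exp.mpr hexp
    nlinarith [this]
  calc P {ω | x < (1 / (T : ℝ)) * ∑ i, (τ i ω : ℝ) * Z i (τ i ω) ω}
      ≤ P (⋃ i : Fin K, ⋃ s ∈ Finset.Icc 1 T,
        ({ω | τ i ω = s} ∩ {ω | (T:ℝ) * x / (K * s) < Z i s ω})) := measure_mono hsub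
    _ ≤ ∑ i : Fin K, P (⋃ s ∈ Finset.Icc 1 T,
        ({ω | τ i ω = s} ∩ {ω | (T:ℝ) * x / (K * s) < Z i s ω})) :=
        measure_iUnion_fintype_le _ _
    _ ≤ ∑ i : Fin K, ∑ s ∈ Finset.Icc 1 T,
        P ({ω | τ i ω = s} ∩ {ω | (T:ℝ) * x / (K * s) < Z i s ω}) := by
        refine Finset.sum_le_sum fun i _ => measure_biUnion_finset_le _ _
    _ ≤ ∑ _i : Fin K, ∑ s ∈ Finset.Icc 1 T, ENNReal.ofReal c := by
        refine Finset.sum_le_sum fun i _ => Finset.sum_le_sum fun s hs => ?_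
        rw [Finset.mem_Icc] at hs
        exact hterm i s hs.1 hs.2
    _ = ENNReal.ofReal (2 * K * T * Real.exp (-a * T * x ^ 2 / K ^ 2)) := by
        rw [Finset.sum_const, Finset.sum_const, Finset.card_univ, Fintype.card_fin,
          Nat.card_Icc]
        simp only [Nat.add_sub_cancel, smul_smul, nsmul_eq_mul]
        rw [← ENNReal.ofReal_natCast K, ← ENNReal.ofReal_natCast T,
          ← ENNReal.ofReal_mul (by positivity), ← ENNReal.ofReal_mul (by positivity)]
        congr 1
        push_cast
        ring
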